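/- Let δ > 0 and define (p_n) by p₀ = 1+δ, p_{n+1} = 1+δ − 1/(1+δ+p_n); let ρ₀ := 1, ρ_m := 1/(1+δ+p_{m−1}) for m ≥ 1, and q_n := ∏_{m=0}^n ρ_m. There exist constants c, C > 0 and δ₀ ∈ (0,1) such that for all δ ∈ (0,δ₀), c ≤ Σ_{n=0}^∞ q_n·(1/(p_n − δ) − 1/(p_n + δ)) ≤ C; that is, the potential difference sum Σ q_n·2δ/(p_n² − δ²) is bounded above and below by positive constants independent of δ. -/

import Mathlib

open Real

theorem stmt_14 :
    ∃ c > (0:ℝ), ∃ C > (0:ℝ), ∃ δ₀ ∈ Set.Ioo (0:ℝ) 1, ∀ δ ∈ Set.Ioo (0:ℝ) δ₀,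
      ∀ p ρ q : ℕ → ℝ,
        p 0 = 1 + δ →
        (∀ n, p (n + 1) = 1 + δ - 1 / (1 + δ + p n)) →
        ρ 0 = 1 →
        (∀ m, 1 ≤ m → ρ m = 1 / (1 + δ + p (m - 1))) →
        (∀ n, q n = ∏ m ∈ Finset.range (n + 1), ρ m) →
        Summable (fun n => q n * (1 / (p n - δ) - 1 / (p n + δ))) ∧
        c ≤ ∑' n, q n * (1 / (p n - δ) - 1 / (p n + δ)) ∧
        (∑' n, q n * (1 / (p n - δ) - 1 / (p n + δ))) ≤ C := by
  refine ⟨1, one_pos, 1, one_pos, 1/2, ⟨by norm_num, by norm_num⟩, ?_⟩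
  rintro δ ⟨hδ0, hδ1⟩ p ρ q hp0 hp hρ0 hρ hq
  -- basic bounds on p
  have hx : ∀ n, δ < p n := by
    intro n
    induction n with
    | zero => rw [hp0]; linarith
    | succ n ih =>
      have h1 : (1:ℝ) < 1 + δ + p n := by linarith
      have h2 : 1 / (1 + δ + p n) < 1 := by
        rw [div_lt_one (by linarith)]; exact h1
      rw [hp n]; linarith
  have hden : ∀ n, (0:ℝ) < 1 + δ + p n := fun n => by have := hx n; linarith
  set ε : ℝ := 2*δ/(1+2*δ) with hε
  have hεpos : 0 < ε := by positivity
  have hεle : ∀ n, ε ≤ p n - δ := by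
    intro n
    cases n with
    | zero =>
      rw [hp0, hε, div_le_iff₀ (by linarith)]
      nlinarith
    | succ n =>
      have h := hx n
      have h1 : 1/(1+δ+p n) ≤ 1/(1+2*δ) := by
        apply one_div_le_one_div_of_le (by linarith) (by linarith)
      have h2 : 1 - 1/(1+2*δ) = ε := by rw [hε]; field_simp; ring
      rw [hp n]; linarith
  have hpd : ∀ n, 0 < p n - δ := fun n => lt_of_lt_of_le hεpos (hεle n)
  have hps : ∀ n, 0 < p n + δ := fun n => by have := hx n; linarith
  -- q facts
  have hq0 : q 0 = 1 := by rw [hq 0, Finset.prod_range_one, hρ0]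
  have hqs : ∀ n, q (n+1) = q n / (1 + δ + p n) := by
    intro n
    rw [hq (n+1), Finset.prod_range_succ, ← hq n, hρ (n+1) (by omega)]
    simp [div_eq_mul_inv]
  have hqpos : ∀ n, 0 < q n := by
    intro n
    induction n with
    | zero => rw [hq0]; norm_num
    | succ n ih => rw [hqs n]; exact div_pos ih (hden n)
  have hqle : ∀ n, q n ≤ (1/(1+2*δ))^n := by
    intro n
    induction n with
    | zero => rw [hq0]; norm_num
    | succ n ih =>
      rw [hqs n, pow_succ]
      have h1 : q n / (1+δ+p n) ≤ q n / (1+2*δ) := by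
        apply div_le_div_of_nonneg_left (hqpos n).le (by linarith) (by have := hx n; linarith)
      calc q n / (1+δ+p n) ≤ q n / (1+2*δ) := h1
        _ = q n * (1/(1+2*δ)) := by ring
        _ ≤ (1/(1+2*δ))^n * (1/(1+2*δ)) := by
            apply mul_le_mul_of_nonneg_right ih (by positivity)
  -- telescoping structure
  set s : ℕ → ℝ := fun n => q n / (p n - δ) with hs
  have hs0 : s 0 = 1 := by simp [hs, hq0, hp0]
  have hsnext : ∀ n, s (n+1) = q n / (p n + δ) := by
    intro n
    have hD := hden n
    have h2 := hps n
    simp only [hs]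
    rw [hqs n, hp n]
    rw [div_div]
    congr 1
    field_simp
    ring
  have hkey : ∀ n, q n * (1 / (p n - δ) - 1 / (p n + δ)) = s n - s (n+1) := by
    intro n
    rw [mul_sub, mul_one_div, mul_one_div, hsnext n]
  have hsnn : ∀ n, 0 ≤ s n := fun n => le_of_lt (div_pos (hqpos n) (hpd n))
  have hnn : ∀ n, 0 ≤ q n * (1 / (p n - δ) - 1 / (p n + δ)) := by
    intro n
    apply mul_nonneg (hqpos n).le
    have : 1/(p n + δ) ≤ 1/(p n - δ) :=
      one_div_le_one_div_of_le (hpd n) (by linarith [hδ0])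
    linarith
  have hpartial : ∀ N, ∑ i ∈ Finset.range N, q i * (1 / (p i - δ) - 1 / (p i + δ)) = 1 - s N := by
    intro N
    rw [Finset.sum_congr rfl (fun i _ => hkey i), Finset.sum_range_sub' s N, hs0]
  -- s tends to 0
  have hstend : Filter.Tendsto s Filter.atTop (nhds 0) := by
    have hr0 : (0:ℝ) ≤ 1/(1+2*δ) := by positivity
    have hr1 : (1:ℝ)/(1+2*δ) < 1 := by
      rw [div_lt_one (by linarith)]; linarith
    have hup : Filter.Tendsto (fun n : ℕ => (1/(1+2*δ))^n / ε) Filter.atTop (nhds 0) := by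
      have := (tendsto_pow_atTop_nhds_zero_of_lt_one hr0 hr1).div_const ε
      simpa using this
    apply squeeze_zero hsnn _ hup
    intro n
    calc s n = q n / (p n - δ) := rfl
      _ ≤ q n / ε := by
          apply div_le_div_of_nonneg_left (hqpos n).le hεpos (hεle n)
      _ ≤ (1/(1+2*δ))^n / ε := by
          gcongr
          exact hqle n
  have hsum : Summable (fun n => q n * (1 / (p n - δ) - 1 / (p n + δ))) := by
    apply summable_of_sum_range_le hnn
    intro n
    rw [hpartial n]
    linarith [hsnn n]
  refine ⟨hsum, ?_⟩
  have ht1 : Filter.Tendsto (fun N => ∑ i ∈ Finset.range N, q i * (1 / (p i - δ) - 1 / (p i + δ)))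
      Filter.atTop (nhds 1) := by
    have : Filter.Tendsto (fun N => 1 - s N) Filter.atTop (nhds (1 - 0)) :=
      Filter.Tendsto.sub tendsto_const_nhds hstend
    simp only [sub_zero] at this
    exact (Filter.Tendsto.congr (fun N => (hpartial N).symm)) this
  have heq : ∑' n, q n * (1 / (p n - δ) - 1 / (p n + δ)) = 1 :=
    tendsto_nhds_unique hsum.hasSum.tendsto_sum_nat ht1
  rw [heq]
  norm_num
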